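/- For every natural number N, the function c ↦ ∫_{−∞}^{∞} e^{−c·cosh y} dy − √(2π/c)·e^{−c}·Σ_{n=0}^{N} (−1)^n·((2n−1)!!)²/(n!·8^n·c^n) is O(e^{−c}·c^{−N−3/2}) as c → +∞ along the reals. -/

import Mathlib

open MeasureTheory Asymptotics Filter

/-- The odd double factorial `(2n−1)!! = (2n)!/(2ⁿ·n!)`, with `(−1)!! = 1`. -/
noncomputable def oddDoubleFactorial (n : ℕ) : ℝ :=
  (Nat.factorial (2 * n) : ℝ) / (2 ^ n * (Nat.factorial n : ℝ))

section SPEaux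
open Real Set Finset

noncomputable def bc (α : ℝ) (n : ℕ) : ℝ := (∏ k ∈ Finset.range n, (α - k)) / (Nat.factorial n)

lemma bc_zero (α : ℝ) : bc α 0 = 1 := by simp [bc]

lemma bc_succ_mul (α : ℝ) (n : ℕ) : ((n : ℝ) + 1) * bc α (n + 1) = α * bc (α - 1) n := by
  have h : ∏ k ∈ Finset.range (n + 1), (α - k) = α * ∏ k ∈ Finset.range n, (α - 1 - k) := by
    rw [Finset.prod_range_succ']
    simp only [Nat.cast_zero, sub_zero]
    rw [mul_comm]
    congr 1
    exact Finset.prod_congr rfl fun k _ => by push_cast; ring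
  have hf : ((Nat.factorial n : ℝ)) ≠ 0 := Nat.cast_ne_zero.2 (Nat.factorial_ne_zero n)
  have hf1 : ((n : ℝ) + 1) ≠ 0 := by positivity
  simp only [bc, h, Nat.factorial_succ]
  push_cast
  field_simp

noncomputable def Cst : ℕ → ℝ → ℝ
  | 0, α => |α|
  | (N+1), α => |α| * Cst N (α - 1) / (N + 2)

lemma Cst_nonneg : ∀ (N : ℕ) (α : ℝ), 0 ≤ Cst N α
  | 0, α => abs_nonneg α
  | (N+1), α => by
      have := Cst_nonneg N (α - 1)
      simp only [Cst]
      positivity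

lemma hasDerivAt_R (α : ℝ) (M : ℕ) {s : ℝ} (hs : 0 ≤ s) :
    HasDerivAt (fun u => (1 + u) ^ α - ∑ n ∈ Finset.range (M + 1), bc α n * u ^ n)
      (α * ((1 + s) ^ (α - 1) - ∑ n ∈ Finset.range M, bc (α - 1) n * s ^ n)) s := by
  have hne : (1 : ℝ) + s ≠ 0 := by positivity
  have h1 : HasDerivAt (fun u : ℝ => (1 + u) ^ α) (α * (1 + s) ^ (α - 1)) s := by
    have := (HasDerivAt.rpow_const (p := α) ((hasDerivAt_id s).const_add 1) (Or.inl hne))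
    simpa using this
  have h2 : HasDerivAt (fun u : ℝ => ∑ n ∈ Finset.range (M + 1), bc α n * u ^ n)
      (∑ n ∈ Finset.range (M + 1), bc α n * (n * s ^ (n - 1))) s :=
    HasDerivAt.fun_sum fun n _ => (hasDerivAt_pow n s).const_mul (bc α n)
  have key : ∑ n ∈ Finset.range (M + 1), bc α n * (n * s ^ (n - 1))
      = α * ∑ n ∈ Finset.range M, bc (α - 1) n * s ^ n := by
    rw [Finset.sum_range_succ', Finset.mul_sum]
    simp only [Nat.cast_zero, zero_mul, mul_zero, add_zero]
    refine Finset.sum_congr rfl fun i _ => ?_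
    have h := bc_succ_mul α i
    calc bc α (i + 1) * ((i + 1 : ℕ) * s ^ (i + 1 - 1))
        = ((i : ℝ) + 1) * bc α (i + 1) * s ^ i := by push_cast [Nat.add_sub_cancel]; ring
      _ = α * (bc (α - 1) i * s ^ i) := by rw [h]; ring
  have := h1.fun_sub h2
  rw [key] at this
  refine this.congr_deriv ?_
  ring

lemma ftc_R (α : ℝ) (M : ℕ) {u : ℝ} (hu : 0 ≤ u) :
    (1 + u) ^ α - ∑ n ∈ Finset.range (M + 1), bc α n * u ^ n
      = ∫ x in (0:ℝ)..u,
          α * ((1 + x) ^ (α - 1) - ∑ n ∈ Finset.range M, bc (α - 1) n * x ^ n) := by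
  have hderiv : ∀ x ∈ Set.uIcc (0:ℝ) u,
      HasDerivAt (fun v : ℝ => (1 + v) ^ α - ∑ n ∈ Finset.range (M + 1), bc α n * v ^ n)
        (α * ((1 + x) ^ (α - 1) - ∑ n ∈ Finset.range M, bc (α - 1) n * x ^ n)) x := by
    intro x hx
    rw [Set.uIcc_of_le hu] at hx
    exact hasDerivAt_R α M hx.1
  have hcont : ContinuousOn
      (fun x : ℝ => α * ((1 + x) ^ (α - 1) - ∑ n ∈ Finset.range M, bc (α - 1) n * x ^ n))
      (Set.uIcc (0:ℝ) u) := by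
    refine continuousOn_const.mul (ContinuousOn.sub ?_ (Continuous.continuousOn (by continuity)))
    refine ContinuousOn.rpow_const (continuousOn_const.add continuousOn_id) fun x hx => Or.inl ?_
    rw [Set.uIcc_of_le hu] at hx
    have : (0:ℝ) ≤ x := hx.1
    positivity
  rw [intervalIntegral.integral_eq_sub_of_hasDerivAt hderiv (hcont.intervalIntegrable)]
  have h0 : ∑ n ∈ Finset.range (M + 1), bc α n * (0:ℝ) ^ n = 1 := by
    rw [Finset.sum_range_succ']
    simp [bc_zero]
  simp [h0]

lemma binom_rem : ∀ (N : ℕ) (α : ℝ), α ≤ 0 → ∀ u : ℝ, 0 ≤ u →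
    |(1 + u) ^ α - ∑ n ∈ Finset.range (N + 1), bc α n * u ^ n| ≤ Cst N α * u ^ (N + 1) := by
  intro N
  induction N with
  | zero =>
    intro α hα u hu
    rw [← Real.norm_eq_abs, ftc_R α 0 hu]
    have hb : ∀ x ∈ Set.uIoc (0:ℝ) u,
        ‖α * ((1 + x) ^ (α - 1) - ∑ n ∈ Finset.range 0, bc (α - 1) n * x ^ n)‖ ≤ |α| := by
      intro x hx
      have hx0 : (0:ℝ) ≤ x := le_of_lt ((Set.uIoc_of_le hu ▸ hx).1)
      simp only [Finset.range_zero, Finset.sum_empty, sub_zero, norm_mul, Real.norm_eq_abs]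
      have h1 : (1 + x) ^ (α - 1) ≤ 1 :=
        Real.rpow_le_one_of_one_le_of_nonpos (by linarith) (by linarith)
      have h2 : (0:ℝ) ≤ (1 + x) ^ (α - 1) := Real.rpow_nonneg (by linarith) _
      calc |α| * |(1 + x) ^ (α - 1)| ≤ |α| * 1 := by
            rw [abs_of_nonneg h2]; exact mul_le_mul_of_nonneg_left h1 (abs_nonneg α)
        _ = |α| := mul_one _
    have := intervalIntegral.norm_integral_le_of_norm_le_const hb
    simpa [Cst, abs_of_nonneg hu] using this
  | succ N ih =>
    intro α hα u hu
    rw [← Real.norm_eq_abs, ftc_R α (N + 1) hu]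
    have hbound : IntervalIntegrable
        (fun x : ℝ => |α| * Cst N (α - 1) * x ^ (N + 1)) volume 0 u :=
      (Continuous.intervalIntegrable (by continuity) 0 u)
    have hb : ∀ᵐ x ∂(volume.restrict (Set.uIoc (0:ℝ) u)),
        ‖α * ((1 + x) ^ (α - 1) - ∑ n ∈ Finset.range (N + 1), bc (α - 1) n * x ^ n)‖
          ≤ |α| * Cst N (α - 1) * x ^ (N + 1) := by
      refine ae_restrict_of_forall_mem measurableSet_uIoc fun x hx => ?_
      have hx0 : (0:ℝ) ≤ x := le_of_lt ((Set.uIoc_of_le hu ▸ hx).1)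
      have := ih (α - 1) (by linarith) x hx0
      rw [norm_mul, Real.norm_eq_abs, Real.norm_eq_abs, mul_assoc]
      exact mul_le_mul_of_nonneg_left this (abs_nonneg α)
    have hle := intervalIntegral.norm_integral_le_of_norm_le hu
      ((ae_restrict_iff' measurableSet_Ioc).1 (by rwa [Set.uIoc_of_le hu] at hb)) hbound
    have hint : ∫ x in (0:ℝ)..u, |α| * Cst N (α - 1) * x ^ (N + 1)
        = |α| * Cst N (α - 1) * (u ^ (N + 2) / (N + 2)) := by
      rw [intervalIntegral.integral_const_mul, integral_pow]
      push_cast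
      ring
    rw [hint] at hle
    have hcst : (0:ℝ) ≤ |α| * Cst N (α - 1) * (u ^ (N + 2) / (N + 2)) := by
      have := Cst_nonneg N (α - 1)
      positivity
    refine hle.trans (le_of_eq ?_)
    simp only [Cst]
    push_cast
    field_simp

lemma Gamma_nat_add_half (n : ℕ) :
    Real.Gamma ((n : ℝ) + 1 / 2)
      = (Nat.factorial (2 * n) : ℝ) / (4 ^ n * Nat.factorial n) * Real.sqrt Real.pi := by
  induction n with
  | zero => simpa using Real.Gamma_one_half_eq
  | succ n ih =>
    have hne : ((n : ℝ) + 1 / 2) ≠ 0 := by positivity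
    have h : ((n + 1 : ℕ) : ℝ) + 1 / 2 = ((n : ℝ) + 1 / 2) + 1 := by push_cast; ring
    rw [h, Real.Gamma_add_one hne, ih]
    have h2 : 2 * (n + 1) = (2 * n + 1) + 1 := by ring
    rw [h2, Nat.factorial_succ, Nat.factorial_succ, Nat.factorial_succ n]
    have h4 : (4:ℝ) ^ (n+1) = 4 * 4 ^ n := by ring
    have hfn : ((Nat.factorial n : ℝ)) ≠ 0 := Nat.cast_ne_zero.2 (Nat.factorial_ne_zero n)
    have hf2n : ((Nat.factorial (2*n) : ℝ)) ≠ 0 := Nat.cast_ne_zero.2 (Nat.factorial_ne_zero _)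
    push_cast [h4]
    field_simp
    ring

lemma moment {b : ℝ} (hb : 0 < b) (n : ℕ) :
    ∫ t : ℝ, t ^ (2 * n) * Real.exp (-b * t ^ 2)
      = (Nat.factorial (2 * n) : ℝ) / (4 ^ n * Nat.factorial n) * Real.sqrt Real.pi
          * b ^ (-(n : ℝ) - 1 / 2) := by
  have h1 : ∫ t : ℝ, t ^ (2 * n) * Real.exp (-b * t ^ 2)
      = 2 * ∫ x in Ioi (0:ℝ), x ^ (2 * n) * Real.exp (-b * x ^ 2) := by
    rw [← integral_comp_abs (f := fun x => x ^ (2 * n) * Real.exp (-b * x ^ 2))]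
    congr 1
    funext t
    rw [(even_two_mul n).pow_abs, sq_abs]
  have h2 : ∫ x in Ioi (0:ℝ), x ^ (2 * n) * Real.exp (-b * x ^ 2)
      = ∫ x in Ioi (0:ℝ), x ^ ((2 * n : ℕ) : ℝ) * Real.exp (-b * x ^ (2:ℝ)) := by
    refine setIntegral_congr_fun measurableSet_Ioi fun x hx => ?_
    rw [Real.rpow_natCast, show x ^ (2:ℝ) = x ^ ((2:ℕ):ℝ) by norm_num, Real.rpow_natCast]
  have h3 := integral_rpow_mul_exp_neg_mul_rpow (p := 2) (q := ((2 * n : ℕ) : ℝ))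
      (b := b) two_pos (by push_cast; linarith [show (0:ℝ) ≤ 2*n by positivity]) hb
  rw [h1, h2, h3]
  have he : (-(((2 * n : ℕ) : ℝ) + 1) / 2) = (-(n : ℝ) - 1 / 2) := by push_cast; ring
  have he2 : ((((2 * n : ℕ) : ℝ)) + 1) / 2 = (n : ℝ) + 1 / 2 := by push_cast; ring
  rw [he, he2, _root_.Gamma_nat_add_half]
  ring

lemma subst_integral {c : ℝ} (hc : 0 < c) :
    ∫ y : ℝ, Real.exp (-c * Real.cosh y)
      = Real.exp (-c) *
          ∫ t : ℝ, Real.exp (-(2 * c) * t ^ 2) * (2 * (1 + t ^ 2) ^ (-(1/2) : ℝ)) := by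
  set g : ℝ → ℝ := fun t => Real.exp (-(2 * c) * t ^ 2) * (2 * (1 + t ^ 2) ^ (-(1/2) : ℝ)) with hg
  have hf' : ∀ x ∈ (Set.univ : Set ℝ),
      HasDerivWithinAt (fun y : ℝ => Real.sinh (y / 2)) (Real.cosh (x / 2) * (1 / 2)) Set.univ x := by
    intro x _
    exact (((Real.hasDerivAt_sinh (x / 2)).comp x ((hasDerivAt_id x).div_const 2)).hasDerivWithinAt)
  have hinj : Set.InjOn (fun y : ℝ => Real.sinh (y / 2)) Set.univ := fun a _ b _ h => by
    have := Real.sinh_injective h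
    linarith
  have himg : (fun y : ℝ => Real.sinh (y / 2)) '' Set.univ = Set.univ := by
    apply Set.image_univ.trans
    rw [Set.range_eq_univ]
    intro t
    obtain ⟨y, hy⟩ := Real.sinh_surjective t
    exact ⟨2 * y, by simpa using hy⟩
  have key := integral_image_eq_integral_abs_deriv_smul MeasurableSet.univ hf' hinj g
  rw [himg] at key
  have hptwise : ∀ x : ℝ,
      |Real.cosh (x / 2) * (1 / 2)| • g (Real.sinh (x / 2))
        = Real.exp c * Real.exp (-c * Real.cosh x) := by
    intro x
    have hcosh : 0 < Real.cosh (x / 2) := Real.cosh_pos (x / 2)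
    have h1 : (1 : ℝ) + Real.sinh (x / 2) ^ 2 = Real.cosh (x / 2) ^ 2 := by
      have := Real.cosh_sq (x / 2); linarith
    have h2 : ((Real.cosh (x / 2) ^ 2 : ℝ)) ^ (-(1/2) : ℝ) = (Real.cosh (x / 2))⁻¹ := by
      rw [← Real.rpow_natCast (Real.cosh (x / 2)) 2, ← Real.rpow_mul hcosh.le]
      norm_num [Real.rpow_neg_one]
    have h3 : Real.cosh x = 2 * Real.sinh (x / 2) ^ 2 + 1 := by
      have h4 := Real.cosh_two_mul (x / 2)
      rw [show 2 * (x / 2) = x by ring] at h4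
      have := Real.cosh_sq (x / 2)
      linarith
    rw [hg]
    simp only [smul_eq_mul]
    rw [h1, h2, abs_of_pos (by positivity), h3, ← Real.exp_add]
    field_simp
    ring_nf
  calc ∫ y : ℝ, Real.exp (-c * Real.cosh y)
      = Real.exp (-c) * ∫ y : ℝ, Real.exp c * Real.exp (-c * Real.cosh y) := by
        rw [integral_const_mul, ← mul_assoc, ← Real.exp_add]
        simp
    _ = Real.exp (-c) * ∫ x in Set.univ, |Real.cosh (x / 2) * (1 / 2)| • g (Real.sinh (x / 2)) := by
        rw [setIntegral_univ]
        congr 1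
        exact (integral_congr_ae (Filter.Eventually.of_forall fun x => (hptwise x).symm))
    _ = Real.exp (-c) * ∫ t : ℝ, g t := by rw [← key, setIntegral_univ]

lemma bc_succ (α : ℝ) (n : ℕ) : bc α (n + 1) = bc α n * (α - n) / (n + 1) := by
  have hf : ((Nat.factorial n : ℝ)) ≠ 0 := Nat.cast_ne_zero.2 (Nat.factorial_ne_zero n)
  simp only [bc, Finset.prod_range_succ, Nat.factorial_succ]
  push_cast
  field_simp
  try ring
  try exact Or.inl trivial

lemma bc_half (n : ℕ) :
    bc (-(1/2)) n = (-1 : ℝ) ^ n * (Nat.factorial (2 * n) : ℝ)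
      / (4 ^ n * ((Nat.factorial n : ℝ)) ^ 2) := by
  induction n with
  | zero => simp [bc_zero]
  | succ n ih =>
    rw [bc_succ, ih, show 2 * (n + 1) = (2 * n + 1) + 1 by ring,
      Nat.factorial_succ, Nat.factorial_succ, Nat.factorial_succ n]
    have hf : ((Nat.factorial n : ℝ)) ≠ 0 := Nat.cast_ne_zero.2 (Nat.factorial_ne_zero n)
    have hn1 : ((n : ℝ) + 1) ≠ 0 := by positivity
    push_cast
    field_simp
    ring

lemma int_pow_gauss {b : ℝ} (hb : 0 < b) (n : ℕ) :
    Integrable (fun t : ℝ => t ^ n * Real.exp (-b * t ^ 2)) := by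
  have h := integrable_rpow_mul_exp_neg_mul_sq hb (s := (n : ℝ))
      (by push_cast; linarith [show (0:ℝ) ≤ (n:ℝ) by positivity])
  simpa [Real.rpow_natCast] using h

lemma int_phi {b : ℝ} (hb : 0 < b) :
    Integrable (fun t : ℝ => Real.exp (-b * t ^ 2) * (2 * (1 + t ^ 2) ^ (-(1/2) : ℝ))) := by
  refine Integrable.mono' ((integrable_exp_neg_mul_sq hb).const_mul 2) ?_ ?_
  · refine Continuous.aestronglyMeasurable ?_
    refine (Real.continuous_exp.comp (by continuity)).mul (continuous_const.mul ?_)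
    exact Continuous.rpow_const (by continuity) fun t => Or.inl (by positivity)
  · refine Filter.Eventually.of_forall fun t => ?_
    have h1 : (1 + t ^ 2 : ℝ) ^ (-(1/2) : ℝ) ≤ 1 :=
      Real.rpow_le_one_of_one_le_of_nonpos (by nlinarith [sq_nonneg t]) (by norm_num)
    have h2 : (0:ℝ) ≤ (1 + t ^ 2 : ℝ) ^ (-(1/2) : ℝ) := Real.rpow_nonneg (by positivity) _
    rw [Real.norm_eq_abs, abs_mul, abs_of_nonneg (Real.exp_pos _).le, abs_of_nonneg (by positivity)]
    rw [mul_comm 2 (Real.exp _)]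
    exact mul_le_mul_of_nonneg_left (by linarith) (Real.exp_pos _).le

lemma sqrt_fact {c : ℝ} (hc : 0 < c) :
    Real.sqrt (2 * Real.pi / c) = 2 * Real.sqrt Real.pi * ((2 * c) ^ (-(1/2) : ℝ)) := by
  have h1 : (2 * Real.pi / c) = (4 * Real.pi) / (2 * c) := by
    field_simp; ring
  rw [h1, Real.sqrt_div (by positivity), show (4 : ℝ) * Real.pi = 2 ^ 2 * Real.pi by norm_num,
    Real.sqrt_mul (by positivity), Real.sqrt_sq (by norm_num : (0:ℝ) ≤ 2),
    Real.rpow_neg (by positivity), ← Real.sqrt_eq_rpow, div_eq_mul_inv]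

lemma term_eq {c : ℝ} (hc : 0 < c) (n : ℕ) :
    Real.sqrt (2 * Real.pi / c) *
        ((-1 : ℝ) ^ n * (oddDoubleFactorial n) ^ 2 /
          ((Nat.factorial n : ℝ) * 8 ^ n * c ^ n))
      = (2 * bc (-(1/2)) n) *
          ((Nat.factorial (2 * n) : ℝ) / (4 ^ n * Nat.factorial n) * Real.sqrt Real.pi
            * (2 * c) ^ (-(n : ℝ) - 1 / 2)) := by
  have hsplit : ((2 * c : ℝ)) ^ (-(n : ℝ) - 1 / 2)
      = ((2 * c) ^ n)⁻¹ * ((2 * c) ^ (-(1/2) : ℝ)) := by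
    rw [show (-(n : ℝ) - 1 / 2) = (-(n:ℝ)) + (-(1/2)) by ring, Real.rpow_add (by positivity),
      Real.rpow_neg (by positivity), Real.rpow_natCast]
  rw [hsplit, bc_half, sqrt_fact hc, oddDoubleFactorial,
    show (8:ℝ) ^ n = 2 ^ (3 * n) by rw [pow_mul]; norm_num,
    show (4:ℝ) ^ n = 2 ^ (2 * n) by rw [pow_mul]; norm_num]
  have hf : ((Nat.factorial n : ℝ)) ≠ 0 := Nat.cast_ne_zero.2 (Nat.factorial_ne_zero n)
  have hc' : c ≠ 0 := ne_of_gt hc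
  have hrp : ((2 * c : ℝ)) ^ (-(1/2) : ℝ) ≠ 0 := by
    apply ne_of_gt; exact Real.rpow_pos_of_pos (by positivity) _
  field_simp
  ring


lemma poly_eq (c : ℝ) (N : ℕ) :
    (fun t : ℝ => Real.exp (-(2 * c) * t ^ 2) *
        (2 * ∑ n ∈ Finset.range (N + 1), bc (-(1/2)) n * t ^ (2 * n)))
      = fun t : ℝ => ∑ n ∈ Finset.range (N + 1),
          (2 * bc (-(1/2)) n) * (t ^ (2 * n) * Real.exp (-(2 * c) * t ^ 2)) := by
  funext t
  rw [Finset.mul_sum, Finset.mul_sum]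
  exact Finset.sum_congr rfl fun n _ => by ring

lemma int_poly {c : ℝ} (hc : 0 < c) (N : ℕ) :
    Integrable (fun t : ℝ => Real.exp (-(2 * c) * t ^ 2) *
        (2 * ∑ n ∈ Finset.range (N + 1), bc (-(1/2)) n * t ^ (2 * n))) := by
  rw [poly_eq]
  exact integrable_finset_sum _ fun n _ => (int_pow_gauss (by positivity) (2 * n)).const_mul _

lemma sum_eq {c : ℝ} (hc : 0 < c) (N : ℕ) :
    Real.sqrt (2 * Real.pi / c) *
        ∑ n ∈ Finset.range (N + 1),
          (-1 : ℝ) ^ n * (oddDoubleFactorial n) ^ 2 /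
            ((Nat.factorial n : ℝ) * 8 ^ n * c ^ n)
      = ∫ t : ℝ, Real.exp (-(2 * c) * t ^ 2) *
          (2 * ∑ n ∈ Finset.range (N + 1), bc (-(1/2)) n * t ^ (2 * n)) := by
  rw [poly_eq, integral_finset_sum _
      (fun n _ => (int_pow_gauss (by positivity : (0:ℝ) < 2 * c) (2 * n)).const_mul _),
    Finset.mul_sum]
  refine Finset.sum_congr rfl fun n _ => ?_
  rw [integral_const_mul, moment (by positivity : (0:ℝ) < 2 * c) n]
  exact term_eq hc n

/-- Stationary phase expansion of the B-model oscillating integral `∫ e^{−c cosh y} dy`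
through the critical point `P₂` of the mirror superpotential of ℙ¹. -/
theorem stationary_phase_expansion (N : ℕ) :
    (fun c : ℝ =>
        (∫ y : ℝ, Real.exp (-c * Real.cosh y)) -
          Real.sqrt (2 * Real.pi / c) * Real.exp (-c) *
            ∑ n ∈ Finset.range (N + 1),
              (-1 : ℝ) ^ n * (oddDoubleFactorial n) ^ 2 /
                ((Nat.factorial n : ℝ) * 8 ^ n * c ^ n)) =O[atTop]
      fun c : ℝ => Real.exp (-c) * c ^ (-(N : ℝ) - 3 / 2) := by
  set CN : ℝ := Cst N (-(1/2)) with hCN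
  have hCN0 : 0 ≤ CN := Cst_nonneg N _
  set M : ℝ := (Nat.factorial (2 * (N + 1)) : ℝ) / (4 ^ (N + 1) * Nat.factorial (N + 1))
      * Real.sqrt Real.pi with hM
  have hM0 : 0 ≤ M := by
    rw [hM]; positivity
  rw [isBigO_iff]
  refine ⟨2 * CN * M * 2 ^ (-(N : ℝ) - 3 / 2), ?_⟩
  filter_upwards [Filter.eventually_gt_atTop (0 : ℝ)] with c hc
  have hb : (0:ℝ) < 2 * c := by positivity
  -- rewrite the LHS as exp(-c) * ∫ of difference
  have hdiff :
      (∫ y : ℝ, Real.exp (-c * Real.cosh y)) -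
          Real.sqrt (2 * Real.pi / c) * Real.exp (-c) *
            ∑ n ∈ Finset.range (N + 1),
              (-1 : ℝ) ^ n * (oddDoubleFactorial n) ^ 2 /
                ((Nat.factorial n : ℝ) * 8 ^ n * c ^ n)
        = Real.exp (-c) *
            ∫ t : ℝ, (Real.exp (-(2 * c) * t ^ 2) * (2 * (1 + t ^ 2) ^ (-(1/2) : ℝ))
              - Real.exp (-(2 * c) * t ^ 2) *
                  (2 * ∑ n ∈ Finset.range (N + 1), bc (-(1/2)) n * t ^ (2 * n))) := by
    rw [integral_sub (int_phi hb) (int_poly hc N), subst_integral hc]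
    rw [show Real.sqrt (2 * Real.pi / c) * Real.exp (-c) *
            (∑ n ∈ Finset.range (N + 1),
              (-1 : ℝ) ^ n * (oddDoubleFactorial n) ^ 2 /
                ((Nat.factorial n : ℝ) * 8 ^ n * c ^ n))
          = Real.exp (-c) * (Real.sqrt (2 * Real.pi / c) *
            ∑ n ∈ Finset.range (N + 1),
              (-1 : ℝ) ^ n * (oddDoubleFactorial n) ^ 2 /
                ((Nat.factorial n : ℝ) * 8 ^ n * c ^ n)) by ring]
    rw [sum_eq hc N]
    ring
  rw [hdiff]
  -- pointwise bound on the integrand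
  have hpt : ∀ t : ℝ,
      ‖Real.exp (-(2 * c) * t ^ 2) * (2 * (1 + t ^ 2) ^ (-(1/2) : ℝ))
        - Real.exp (-(2 * c) * t ^ 2) *
            (2 * ∑ n ∈ Finset.range (N + 1), bc (-(1/2)) n * t ^ (2 * n))‖
      ≤ 2 * CN * (t ^ (2 * (N + 1)) * Real.exp (-(2 * c) * t ^ 2)) := by
    intro t
    have hrem := binom_rem N (-(1/2)) (by norm_num) (t ^ 2) (sq_nonneg t)
    have hpow : ∀ n : ℕ, (t ^ 2) ^ n = t ^ (2 * n) := fun n => (pow_mul t 2 n).symm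
    rw [show Real.exp (-(2 * c) * t ^ 2) * (2 * (1 + t ^ 2) ^ (-(1/2) : ℝ))
        - Real.exp (-(2 * c) * t ^ 2) *
            (2 * ∑ n ∈ Finset.range (N + 1), bc (-(1/2)) n * t ^ (2 * n))
      = Real.exp (-(2 * c) * t ^ 2) * 2 *
          ((1 + t ^ 2) ^ (-(1/2) : ℝ)
            - ∑ n ∈ Finset.range (N + 1), bc (-(1/2)) n * (t ^ 2) ^ n) by
        simp only [hpow]; ring]
    rw [Real.norm_eq_abs, abs_mul, abs_of_nonneg (by positivity :
        (0:ℝ) ≤ Real.exp (-(2 * c) * t ^ 2) * 2)]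
    calc Real.exp (-(2 * c) * t ^ 2) * 2 *
          |(1 + t ^ 2) ^ (-(1/2) : ℝ)
            - ∑ n ∈ Finset.range (N + 1), bc (-(1/2)) n * (t ^ 2) ^ n|
        ≤ Real.exp (-(2 * c) * t ^ 2) * 2 * (CN * (t ^ 2) ^ (N + 1)) := by
          exact mul_le_mul_of_nonneg_left hrem (by positivity)
      _ = 2 * CN * (t ^ (2 * (N + 1)) * Real.exp (-(2 * c) * t ^ 2)) := by
          rw [hpow]; ring
  -- integral bound
  have hsub : Integrable (fun t : ℝ =>
      Real.exp (-(2 * c) * t ^ 2) * (2 * (1 + t ^ 2) ^ (-(1/2) : ℝ))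
        - Real.exp (-(2 * c) * t ^ 2) *
            (2 * ∑ n ∈ Finset.range (N + 1), bc (-(1/2)) n * t ^ (2 * n))) :=
    (int_phi hb).sub (int_poly hc N)
  have hboundInt : Integrable (fun t : ℝ =>
      2 * CN * (t ^ (2 * (N + 1)) * Real.exp (-(2 * c) * t ^ 2))) :=
    (int_pow_gauss hb (2 * (N + 1))).const_mul _
  have hIbd : ‖∫ t : ℝ, (Real.exp (-(2 * c) * t ^ 2) * (2 * (1 + t ^ 2) ^ (-(1/2) : ℝ))
        - Real.exp (-(2 * c) * t ^ 2) *
            (2 * ∑ n ∈ Finset.range (N + 1), bc (-(1/2)) n * t ^ (2 * n)))‖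
      ≤ 2 * CN * M * (2 * c) ^ (-((N:ℝ) + 1) - 1 / 2) := by
    refine (norm_integral_le_integral_norm _).trans ?_
    have h1 : ∫ t : ℝ, ‖Real.exp (-(2 * c) * t ^ 2) * (2 * (1 + t ^ 2) ^ (-(1/2) : ℝ))
        - Real.exp (-(2 * c) * t ^ 2) *
            (2 * ∑ n ∈ Finset.range (N + 1), bc (-(1/2)) n * t ^ (2 * n))‖
        ≤ ∫ t : ℝ, 2 * CN * (t ^ (2 * (N + 1)) * Real.exp (-(2 * c) * t ^ 2)) :=
      integral_mono hsub.norm hboundInt hpt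
    refine h1.trans (le_of_eq ?_)
    rw [integral_const_mul, moment hb (N + 1)]
    rw [hM]
    push_cast
    ring
  calc ‖Real.exp (-c) * ∫ t : ℝ, (Real.exp (-(2 * c) * t ^ 2) * (2 * (1 + t ^ 2) ^ (-(1/2) : ℝ))
        - Real.exp (-(2 * c) * t ^ 2) *
            (2 * ∑ n ∈ Finset.range (N + 1), bc (-(1/2)) n * t ^ (2 * n)))‖
      = Real.exp (-c) * ‖∫ t : ℝ, (Real.exp (-(2 * c) * t ^ 2) * (2 * (1 + t ^ 2) ^ (-(1/2) : ℝ))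
        - Real.exp (-(2 * c) * t ^ 2) *
            (2 * ∑ n ∈ Finset.range (N + 1), bc (-(1/2)) n * t ^ (2 * n)))‖ := by
        rw [norm_mul, Real.norm_eq_abs, abs_of_pos (Real.exp_pos _)]
    _ ≤ Real.exp (-c) * (2 * CN * M * (2 * c) ^ (-((N:ℝ) + 1) - 1 / 2)) :=
        mul_le_mul_of_nonneg_left hIbd (Real.exp_pos _).le
    _ = 2 * CN * M * 2 ^ (-(N : ℝ) - 3 / 2) * ‖Real.exp (-c) * c ^ (-(N : ℝ) - 3 / 2)‖ := by
        rw [show (-((N:ℝ) + 1) - 1 / 2) = (-(N : ℝ) - 3 / 2) by ring,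
          Real.mul_rpow (by norm_num) hc.le, Real.norm_eq_abs, abs_mul,
          abs_of_pos (Real.exp_pos _), abs_of_pos (Real.rpow_pos_of_pos hc _)]
        ring

end SPEaux
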